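/- For every feasible point x of the relaxation (x ∈ [0,1]^n, ‖x‖₁ ≤ σ), there exists x′ ∈ [0,1]^n with Ax = Ax′, ‖x′‖₁ ≤ σ, and at most m entries of x′ are non-integral. -/

import Mathlib

open scoped BigOperators Classical

def l1 {n : ℕ} (v : Fin n → ℝ) : ℝ := ∑ i, |v i|

noncomputable def Frac {n : ℕ} (x : Fin n → ℝ) : Finset (Fin n) :=
  Finset.univ.filter (fun i => ¬ ∃ z : ℤ, x i = z)

lemma step_lemma (m n : ℕ) (A : Matrix (Fin m) (Fin n) ℤ) (x : Fin n → ℝ)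
    (hx01 : ∀ i, 0 ≤ x i ∧ x i ≤ 1) (h : m < (Frac x).card) :
    ∃ y : Fin n → ℝ, (∀ i, 0 ≤ y i ∧ y i ≤ 1) ∧
      (∑ i, y i) ≤ ∑ i, x i ∧
      (∀ r : Fin m, ∑ j, (A r j : ℝ) * y j = ∑ j, (A r j : ℝ) * x j) ∧
      (Frac y).card < (Frac x).card := by
  classical
  set F := Frac x with hF
  have hFrac : ∀ i ∈ F, 0 < x i ∧ x i < 1 := by
    intro i hi
    simp only [hF, Frac, Finset.mem_filter] at hi
    obtain ⟨h0, h1⟩ := hx01 i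
    refine ⟨lt_of_le_of_ne h0 ?_, lt_of_le_of_ne h1 ?_⟩
    · intro he; exact hi.2 ⟨0, by simp [← he]⟩
    · intro he; exact hi.2 ⟨1, by simp [he]⟩
  let M : Matrix (Fin m) ↥F ℝ := fun r i => (A r i : ℝ)
  let f := M.mulVecLin
  have hni : ¬ Function.Injective f := by
    intro hinj
    have := LinearMap.finrank_le_finrank_of_injective hinj
    simp only [Module.finrank_fintype_fun_eq_card, Fintype.card_coe,
      Fintype.card_fin] at this
    omega
  have hker : ∃ u : ↥F → ℝ, u ≠ 0 ∧ f u = 0 := by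
    rw [← LinearMap.ker_eq_bot] at hni
    obtain ⟨u, hu, hu0⟩ := Submodule.ne_bot_iff _ |>.mp hni
    exact ⟨u, hu0, hu⟩
  obtain ⟨u, hu0, hfu⟩ := hker
  obtain ⟨u, hu0, hfu, hsum⟩ :
      ∃ u : ↥F → ℝ, u ≠ 0 ∧ f u = 0 ∧ ∑ i, u i ≤ 0 := by
    rcases le_or_gt (∑ i, u i) 0 with hs | hs
    · exact ⟨u, hu0, hfu, hs⟩
    · refine ⟨-u, neg_ne_zero.mpr hu0, by simp [hfu], ?_⟩
      simp only [Pi.neg_apply, Finset.sum_neg_distrib]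
      linarith
  let d : Fin n → ℝ := fun i => if h : i ∈ F then u ⟨i, h⟩ else 0
  have hd_out : ∀ i, i ∉ F → d i = 0 := fun i hi => dif_neg hi
  have hd_in : ∀ (i : ↥F), d ↑i = u i := by
    intro i; show dite _ _ _ = _; rw [dif_pos i.2]
  have hsum_eq : ∀ g : Fin n → ℝ, (∑ j, g j * d j) = ∑ i : ↥F, g ↑i * u i := by
    intro g
    have h1 : (∑ j, g j * d j) = ∑ j ∈ F, g j * d j := by
      refine (Finset.sum_subset (Finset.subset_univ F) ?_).symm
      intro j _ hj; rw [hd_out j hj, mul_zero]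
    rw [h1, ← Finset.sum_coe_sort F (fun j => g j * d j)]
    exact Finset.sum_congr rfl fun i _ => by rw [hd_in i]
  -- A d = 0
  have hAd : ∀ r : Fin m, (∑ j, (A r j : ℝ) * d j) = 0 := by
    intro r
    rw [hsum_eq (fun j => (A r j : ℝ))]
    have : (Matrix.mulVec M u) r = 0 := congrFun hfu r
    simpa [f, M, Matrix.mulVec, dotProduct] using this
  -- sum d ≤ 0
  have hds : (∑ j, d j) ≤ 0 := by
    have := hsum_eq (fun _ => (1 : ℝ))
    simp only [one_mul] at this
    rw [this]; exact hsum
  -- d nonzero somewhere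
  obtain ⟨i1, hi1⟩ : ∃ i, d i ≠ 0 := by
    obtain ⟨i, hi⟩ := Function.ne_iff.mp hu0
    exact ⟨↑i, by rw [hd_in i]; simpa using hi⟩
  have hdF : ∀ i, d i ≠ 0 → i ∈ F := by
    intro i hi; by_contra hc; exact hi (hd_out i hc)
  -- the step size
  set S : Finset (Fin n) := Finset.univ.filter (fun i => d i ≠ 0) with hS
  have hSne : S.Nonempty := ⟨i1, by simp [hS, hi1]⟩
  let b : Fin n → ℝ := fun i => if 0 < d i then (1 - x i) / d i else x i / (-(d i))
  set t := S.inf' hSne b with ht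
  have hbpos : ∀ i ∈ S, 0 < b i := by
    intro i hi
    have hdi : d i ≠ 0 := by simpa [hS] using hi
    obtain ⟨h0, h1⟩ := hFrac i (hdF i hdi)
    by_cases hp : 0 < d i
    · simp only [b, if_pos hp]; exact div_pos (by linarith) hp
    · have hn : d i < 0 := lt_of_le_of_ne (not_lt.mp hp) hdi
      simp only [b, if_neg hp]
      apply div_pos h0; linarith
  have htpos : 0 < t := by
    rw [ht, Finset.lt_inf'_iff]; exact fun i hi => hbpos i hi
  obtain ⟨i0, hi0S, hi0⟩ := Finset.exists_mem_eq_inf' hSne b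
  have hd0 : d i0 ≠ 0 := by simpa [hS] using hi0S
  have ht_le : ∀ i ∈ S, t ≤ b i := fun i hi => Finset.inf'_le b hi
  -- define y
  set y : Fin n → ℝ := fun i => x i + t * d i with hy
  have hbound : ∀ i, 0 ≤ y i ∧ y i ≤ 1 := by
    intro i
    by_cases hz : d i = 0
    · simp [hy, hz]; exact hx01 i
    · have hiS : i ∈ S := by simp [hS, hz]
      have hb := ht_le i hiS
      obtain ⟨h0, h1⟩ := hx01 i
      by_cases hp : 0 < d i
      · have : t * d i ≤ 1 - x i := by
          have := hb; simp only [b, if_pos hp] at this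
          calc t * d i ≤ ((1 - x i) / d i) * d i := by
                exact mul_le_mul_of_nonneg_right this (le_of_lt hp)
            _ = 1 - x i := div_mul_cancel₀ _ (ne_of_gt hp)
        constructor
        · simp only [hy]; nlinarith
        · simp only [hy]; linarith
      · have hn : d i < 0 := lt_of_le_of_ne (not_lt.mp hp) hz
        have : -(t * d i) ≤ x i := by
          have hb' := hb; simp only [b, if_neg hp] at hb'
          have : t * (-(d i)) ≤ (x i / (-(d i))) * (-(d i)) :=
            mul_le_mul_of_nonneg_right hb' (by linarith)
          rw [div_mul_cancel₀ _ (by linarith : -(d i) ≠ 0)] at this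
          linarith
        constructor
        · simp only [hy]; linarith
        · simp only [hy]; nlinarith
  have hAy : ∀ r : Fin m, ∑ j, (A r j : ℝ) * y j = ∑ j, (A r j : ℝ) * x j := by
    intro r
    have : ∑ j, (A r j : ℝ) * y j
        = (∑ j, (A r j : ℝ) * x j) + t * ∑ j, (A r j : ℝ) * d j := by
      rw [Finset.mul_sum, ← Finset.sum_add_distrib]
      exact Finset.sum_congr rfl fun j _ => by simp [hy]; ring
    rw [this, hAd r]; ring
  have hsy : (∑ i, y i) ≤ ∑ i, x i := by
    have : (∑ i, y i) = (∑ i, x i) + t * ∑ i, d i := by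
      rw [Finset.mul_sum, ← Finset.sum_add_distrib]
    rw [this]; nlinarith
  -- fractional set shrinks
  have hy_i0 : ∃ z : ℤ, y i0 = z := by
    have htb : t = b i0 := by rw [ht, hi0]
    by_cases hp : 0 < d i0
    · refine ⟨1, ?_⟩
      have hb : b i0 = (1 - x i0) / d i0 := by simp [b, if_pos hp]
      have htd : t * d i0 = 1 - x i0 := by
        rw [htb, hb, div_mul_cancel₀ _ (ne_of_gt hp)]
      show x i0 + t * d i0 = ((1 : ℤ) : ℝ)
      push_cast; linarith
    · refine ⟨0, ?_⟩
      have hn : d i0 < 0 := lt_of_le_of_ne (not_lt.mp hp) hd0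
      have hb : b i0 = x i0 / (-(d i0)) := by simp [b, if_neg hp]
      have htd : t * d i0 = -x i0 := by
        rw [htb, hb]; field_simp
      show x i0 + t * d i0 = ((0 : ℤ) : ℝ)
      push_cast; linarith
  have hsub : Frac y ⊆ F.erase i0 := by
    intro i hi
    simp only [Frac, Finset.mem_filter, Finset.mem_univ, true_and] at hi
    rw [Finset.mem_erase]
    constructor
    · rintro rfl; exact hi hy_i0
    · by_contra hc
      have hdz : d i = 0 := hd_out i hc
      apply hi
      have : y i = x i := by simp [hy, hdz]
      rw [this]
      by_contra hni'
      exact hc (by simp only [hF, Frac, Finset.mem_filter, Finset.mem_univ, true_and]; exact hni')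
  exact ⟨y, hbound, hsy, hAy,
    calc (Frac y).card ≤ (F.erase i0).card := Finset.card_le_card hsub
      _ < F.card := Finset.card_erase_lt_of_mem (hdF i0 hd0)⟩

/-- every feasible point of the ℓ₁-relaxation has an equivalent
feasible point (same image under A) with at most m non-integral entries. -/
theorem few_fractional_l1 (m n : ℕ) (A : Matrix (Fin m) (Fin n) ℤ)
    (σ : ℕ) (hσ : 1 ≤ σ) (x : Fin n → ℝ)
    (hx01 : ∀ i, 0 ≤ x i ∧ x i ≤ 1) (hx1 : l1 x ≤ σ) :
    ∃ x' : Fin n → ℝ, (∀ i, 0 ≤ x' i ∧ x' i ≤ 1) ∧ l1 x' ≤ σ ∧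
      (∀ r : Fin m, ∑ j, (A r j : ℝ) * x' j = ∑ j, (A r j : ℝ) * x j) ∧
      (Finset.univ.filter (fun i => ¬ ∃ z : ℤ, x' i = z)).card ≤ m := by
  classical
  -- auxiliary induction
  have aux : ∀ k (x : Fin n → ℝ), (Frac x).card ≤ k → (∀ i, 0 ≤ x i ∧ x i ≤ 1) →
      ∃ y : Fin n → ℝ, (∀ i, 0 ≤ y i ∧ y i ≤ 1) ∧ (∑ i, y i) ≤ ∑ i, x i ∧
        (∀ r : Fin m, ∑ j, (A r j : ℝ) * y j = ∑ j, (A r j : ℝ) * x j) ∧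
        (Frac y).card ≤ m := by
    intro k
    induction k with
    | zero => intro x hk hx; exact ⟨x, hx, le_refl _, fun r => rfl, by omega⟩
    | succ k ih =>
      intro x hk hx
      by_cases hm : (Frac x).card ≤ m
      · exact ⟨x, hx, le_refl _, fun r => rfl, hm⟩
      · obtain ⟨y, hy01, hys, hyA, hyc⟩ := step_lemma m n A x hx (by omega)
        obtain ⟨z, hz01, hzs, hzA, hzc⟩ := ih y (by omega) hy01
        exact ⟨z, hz01, le_trans hzs hys,
          fun r => (hzA r).trans (hyA r), hzc⟩
  obtain ⟨y, hy01, hys, hyA, hyc⟩ := aux (Frac x).card x (le_refl _) hx01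
  refine ⟨y, hy01, ?_, hyA, ?_⟩
  · have h1 : l1 y = ∑ i, y i :=
      Finset.sum_congr rfl fun i _ => abs_of_nonneg (hy01 i).1
    have h2 : l1 x = ∑ i, x i :=
      Finset.sum_congr rfl fun i _ => abs_of_nonneg (hx01 i).1
    rw [h1]; rw [h2] at hx1; linarith
  · exact hyc
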